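/- Let X be a connected simple graph on a finite nonempty vertex set with adjacency matrix A (over ℝ), with spectral decomposition given by distinct real eigenvalues θ_1,…,θ_m and idempotents E_1,…,E_m. Then for every pair of vertices a and b, the graph distance satisfies dist(a,b) + 1 ≤ |{r : E_r·e_a ≠ 0}|; in particular the eccentricity of a is strictly less than the size of the eigenvalue support of a. (The proof shows the vectors (A+I)^j·e_a for j = 0,…,c, where c is the eccentricity of a, are linearly independent and lie in the span of the nonzero vectors E_r·e_a.) -/

import Mathlib

open Matrix

section Aux

variable {V : Type*} [Fintype V] [DecidableEq V]

lemma sum_mulVec' {ι : Type*} (s : Finset ι) (M : ι → Matrix V V ℝ) (v : V → ℝ) :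
    (∑ r ∈ s, M r) *ᵥ v = ∑ r ∈ s, M r *ᵥ v := by
  ext i
  simp [Matrix.mulVec, dotProduct, Matrix.sum_apply, Finset.sum_mul]
  rw [Finset.sum_comm]

variable (X : SimpleGraph V) [DecidableRel X.Adj]

lemma pow_entry_nonneg (j : ℕ) : ∀ u v : V, 0 ≤ ((X.adjMatrix ℝ + 1) ^ j) u v := by
  induction j with
  | zero => intro u v; simp [Matrix.one_apply]; positivity
  | succ j ih =>
    intro u v
    rw [pow_succ']
    rw [Matrix.mul_apply]
    apply Finset.sum_nonneg
    intro w _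
    apply mul_nonneg _ (ih w v)
    simp [Matrix.one_apply]
    positivity

lemma pow_entry_pos (hconn : X.Connected) (j : ℕ) :
    ∀ u v : V, X.dist u v ≤ j → 0 < ((X.adjMatrix ℝ + 1) ^ j) u v := by
  induction j with
  | zero =>
    intro u v h
    have : u = v := ((hconn u v).dist_eq_zero_iff).mp (Nat.le_zero.mp h)
    subst this; simp [Matrix.one_apply]
  | succ j ih =>
    intro u v h
    rw [pow_succ', Matrix.mul_apply]
    by_cases hle : X.dist u v ≤ j
    · have h1 : (0:ℝ) < (X.adjMatrix ℝ + 1) u u * ((X.adjMatrix ℝ + 1) ^ j) u v := by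
        have := ih u v hle
        simp [Matrix.one_apply, X.irrefl]
        exact this
      calc (0:ℝ) < _ := h1
        _ ≤ _ := Finset.single_le_sum (f := fun w => (X.adjMatrix ℝ + 1) u w * ((X.adjMatrix ℝ + 1) ^ j) w v)
            (fun w _ => mul_nonneg (by simp [Matrix.one_apply]; positivity) (pow_entry_nonneg X j w v))
            (Finset.mem_univ u)
    · have hd : X.dist u v = j + 1 := le_antisymm h (not_le.mp hle)
      obtain ⟨p, hp⟩ := (hconn u v).exists_walk_length_eq_dist
      cases p with
      | nil => simp at hd
      | @cons _ w _ hadj q =>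
        have hq : X.dist w v ≤ j := by
          have := X.dist_le q
          simp [hd] at hp
          omega
        have h1 : (0:ℝ) < (X.adjMatrix ℝ + 1) u w * ((X.adjMatrix ℝ + 1) ^ j) w v := by
          have hne : u ≠ w := X.ne_of_adj hadj
          have := ih w v hq
          simp [Matrix.one_apply, hadj, hne]
          exact this
        calc (0:ℝ) < _ := h1
          _ ≤ _ := Finset.single_le_sum (f := fun w => (X.adjMatrix ℝ + 1) u w * ((X.adjMatrix ℝ + 1) ^ j) w v)
              (fun w _ => mul_nonneg (by simp [Matrix.one_apply]; positivity) (pow_entry_nonneg X j w v))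
              (Finset.mem_univ w)

lemma dist_le_of_pow_entry_ne (hconn : X.Connected) (j : ℕ) :
    ∀ u v : V, ((X.adjMatrix ℝ + 1) ^ j) u v ≠ 0 → X.dist u v ≤ j := by
  induction j with
  | zero =>
    intro u v h
    have huv : u = v := by
      by_contra hne
      simp [Matrix.one_apply, hne] at h
    simp [huv]
  | succ j ih =>
    intro u v h
    rw [pow_succ', Matrix.mul_apply] at h
    obtain ⟨w, -, hw⟩ := Finset.exists_ne_zero_of_sum_ne_zero h
    have h1 : (X.adjMatrix ℝ + 1) u w ≠ 0 := fun hz => hw (by simp [hz])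
    have h2 : ((X.adjMatrix ℝ + 1) ^ j) w v ≠ 0 := fun hz => hw (by simp [hz])
    have hwv := ih w v h2
    have huw : X.dist u w ≤ 1 := by
      by_cases hadj : X.Adj u w
      · exact (X.dist_le hadj.toWalk).trans (by simp)
      · by_cases heq : u = w
        · subst heq; rw [SimpleGraph.dist_self]; omega
        · exfalso; apply h1; simp [Matrix.one_apply, hadj, heq]
    calc X.dist u v ≤ X.dist u w + X.dist w v := hconn.dist_triangle
      _ ≤ 1 + j := add_le_add huw hwv
      _ = j + 1 := by omega

lemma exists_vertex_at_dist (hconn : X.Connected) (a b : V) :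
    ∀ j : ℕ, j ≤ X.dist a b → ∃ u : V, X.dist a u = j := by
  intro j
  induction j with
  | zero => intro _; exact ⟨a, by simp⟩
  | succ j ih =>
    intro hj
    -- strengthen: find u with dist a u = j and dist u b = dist a b - j
    clear ih
    -- we prove stronger statement by induction again
    suffices h : ∀ k : ℕ, k ≤ X.dist a b → ∃ u : V, X.dist a u = k ∧ X.dist u b = X.dist a b - k by
      obtain ⟨u, hu, -⟩ := h (j+1) hj
      exact ⟨u, hu⟩
    intro k
    induction k with
    | zero => intro _; exact ⟨a, by simp, by simp⟩
    | succ k ihk =>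
      intro hk
      obtain ⟨u, hu1, hu2⟩ := ihk (by omega)
      have hub : X.dist u b ≠ 0 := by omega
      obtain ⟨p, hp⟩ := (hconn u b).exists_walk_length_eq_dist
      cases p with
      | nil => simp only [SimpleGraph.Walk.length_nil] at hp; omega
      | @cons _ w _ hadj q =>
        have hq : X.dist w b ≤ X.dist u b - 1 := by
          have := X.dist_le q
          simp only [SimpleGraph.Walk.length_cons] at hp
          omega
        have hup : X.dist a w ≤ k + 1 := by
          calc X.dist a w ≤ X.dist a u + X.dist u w := hconn.dist_triangle
            _ ≤ k + 1 := by
              have : X.dist u w ≤ 1 := (X.dist_le hadj.toWalk).trans (by simp)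
              omega
        have hlow : X.dist a b ≤ X.dist a w + X.dist w b := hconn.dist_triangle
        refine ⟨w, by omega, by omega⟩

end Aux

/-- Let `X` be a connected simple graph on a finite nonempty
vertex set with real adjacency matrix `A = ∑ θ_r • E_r` (spectral
decomposition). Then for all vertices `a`, `b`, we have
`dist(a,b) + 1 ≤ |{r : E_r·e_a ≠ 0}|`. -/
theorem stmt_19 {V : Type*} [Fintype V] [DecidableEq V] [Nonempty V]
    (X : SimpleGraph V) [DecidableRel X.Adj] (hconn : X.Connected)
    {m : ℕ} (θ : Fin m → ℝ) (hθ : Function.Injective θ)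
    (E : Fin m → Matrix V V ℝ)
    (hE0 : ∀ r, E r ≠ 0)
    (hEsym : ∀ r, (E r)ᵀ = E r)
    (hEmul : ∀ r s : Fin m, E r * E s = if r = s then E r else 0)
    (hEsum : ∑ r, E r = 1)
    (hspec : X.adjMatrix ℝ = ∑ r, θ r • E r) :
    ∀ a b : V, X.dist a b + 1 ≤ {r : Fin m | E r *ᵥ Pi.single a 1 ≠ 0}.ncard := by
  classical
  -- spectral identity for powers of A + 1
  have hB : X.adjMatrix ℝ + 1 = ∑ r, (θ r + 1) • E r := by
    rw [hspec, ← hEsum, ← Finset.sum_add_distrib]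
    congr 1; ext r : 1
    rw [add_smul, one_smul]
  have hpow : ∀ j : ℕ, (X.adjMatrix ℝ + 1) ^ j = ∑ r, ((θ r + 1) ^ j) • E r := by
    intro j
    induction j with
    | zero => simp [hEsum]
    | succ j ih =>
      rw [pow_succ, ih, hB, Finset.sum_mul_sum]
      rw [Finset.sum_comm]
      congr 1; ext r : 1
      rw [Finset.sum_eq_single r]
      · rw [smul_mul_smul_comm, hEmul, if_pos rfl, pow_succ]
      · intro s _ hs
        rw [smul_mul_smul_comm, hEmul, if_neg hs, smul_zero]
      · intro h; exact absurd (Finset.mem_univ r) h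
  intro a b
  set d := X.dist a b with hd
  set e : V → ℝ := Pi.single a 1 with he
  set f : Fin m → (V → ℝ) := fun r => E r *ᵥ e with hf
  set t : Finset (Fin m) := Finset.univ.filter (fun r => f r ≠ 0) with ht
  have hset : {r : Fin m | E r *ᵥ Pi.single a 1 ≠ 0} = ↑t := by
    ext r; simp [ht, hf, he]
  rw [hset, Set.ncard_coe_finset]
  -- the span
  set W : Submodule ℝ (V → ℝ) := Submodule.span ℝ (↑(t.image f) : Set (V → ℝ)) with hW
  have hfinrank : Module.finrank ℝ W ≤ t.card := by
    calc Module.finrank ℝ W ≤ (t.image f).card := finrank_span_finset_le_card (t.image f)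
      _ ≤ t.card := Finset.card_image_le
  -- vectors
  set v : Fin (d+1) → (V → ℝ) := fun j => ((X.adjMatrix ℝ + 1) ^ (j : ℕ)) *ᵥ e with hv
  have hmem : ∀ j, v j ∈ W := by
    intro j
    rw [hv]
    simp only
    rw [hpow, sum_mulVec']
    apply Submodule.sum_mem
    intro r _
    rw [Matrix.smul_mulVec]
    by_cases h : f r = 0
    · have h' : E r *ᵥ e = 0 := h
      rw [h', smul_zero]; exact W.zero_mem
    · apply Submodule.smul_mem
      apply Submodule.subset_span
      simp only [Finset.coe_image, Set.mem_image]
      exact ⟨r, by simp [ht, h], rfl⟩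
  -- vertices at each distance
  have hvert : ∀ j : ℕ, j ≤ d → ∃ u : V, X.dist a u = j :=
    exists_vertex_at_dist X hconn a b
  let u : Fin (d+1) → V := fun j => (hvert j (by omega)).choose
  have hu : ∀ j : Fin (d+1), X.dist a (u j) = j := fun j => (hvert j (by omega)).choose_spec
  -- linear independence
  have hindep : LinearIndependent ℝ v := by
    rw [Fintype.linearIndependent_iff]
    intro g hg
    by_contra hne
    push_neg at hne
    obtain ⟨i0, hi0⟩ := hne
    set s : Finset (Fin (d+1)) := Finset.univ.filter (fun i => g i ≠ 0) with hs
    have hsne : s.Nonempty := ⟨i0, by simp [hs, hi0]⟩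
    set j := s.max' hsne with hj
    have hjmem : g j ≠ 0 := by have := s.max'_mem hsne; simp [hs] at this; exact this
    have hgj : ∀ i : Fin (d+1), g i ≠ 0 → i ≤ j := fun i hi => s.le_max' i (by simp [hs, hi])
    have heval := congrFun hg (u j)
    rw [Finset.sum_apply] at heval
    simp only [Pi.smul_apply, smul_eq_mul, Pi.zero_apply] at heval
    have hentry : ∀ i : Fin (d+1), v i (u j) = ((X.adjMatrix ℝ + 1) ^ (i:ℕ)) (u j) a := by
      intro i
      rw [hv]; simp [he]
    have hdj : X.dist (u j) a = (j : ℕ) := by rw [SimpleGraph.dist_comm]; exact hu j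
    have hsingle : ∑ i, g i * v i (u j) = g j * v j (u j) := by
      apply Finset.sum_eq_single
      · intro i _ hij
        by_cases hgi : g i = 0
        · rw [hgi, zero_mul]
        · have hle : i ≤ j := hgj i hgi
          have hlt : (i : ℕ) < (j : ℕ) := lt_of_le_of_ne (by exact_mod_cast hle) (fun h => hij (Fin.ext h))
          have : v i (u j) = 0 := by
            rw [hentry i]
            by_contra hnz
            have := dist_le_of_pow_entry_ne X hconn i (u j) a hnz
            omega
          rw [this, mul_zero]
      · intro h; exact absurd (Finset.mem_univ j) h
    rw [hsingle] at heval
    have hpos : 0 < v j (u j) := by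
      rw [hentry j]
      exact pow_entry_pos X hconn j (u j) a (by omega)
    exact hjmem (by
      rcases mul_eq_zero.mp heval with h | h
      · exact h
      · exact absurd h hpos.ne')
  -- conclude
  have hcard : d + 1 ≤ Module.finrank ℝ W := by
    let v' : Fin (d+1) → W := fun j => ⟨v j, hmem j⟩
    have : LinearIndependent ℝ v' := by
      apply LinearIndependent.of_comp W.subtype
      exact hindep
    have := this.fintype_card_le_finrank
    simpa using this
  omega
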